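/- Let N ≥ 3 be an integer, μ ∈ (0,1/4], α := 1/2 + √(1/4 − μ), and let q satisfy 1 < q < (N+α)/(N+α−1). Let α₀ ∈ (α,1) satisfy q < (N+α₀)/(N+α₀−1). Then there exists γ₂ > 0 such that the function u̲(x) := γ₂·x_N^{α₀}·|x|^{−(2−q)/(q−1)−α₀} satisfies Δu̲(x) + (μ/x_N²)·u̲(x) ≥ ‖∇u̲(x)‖^q for every x ∈ ℝ^N with x_N > 0. -/

import Mathlib

open MeasureTheory Metric Set

/-- The Laplacian of `u : ℝ^N → ℝ`, as the sum of the second partial derivatives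
in the coordinate directions. -/
noncomputable def lap {N : ℕ} (u : EuclideanSpace ℝ (Fin N) → ℝ)
    (x : EuclideanSpace ℝ (Fin N)) : ℝ :=
  ∑ i : Fin N, fderiv ℝ (fun y => fderiv ℝ u y (EuclideanSpace.single i 1)) x
    (EuclideanSpace.single i 1)

/-- The last coordinate index of `Fin N`. -/
def lastIdx (N : ℕ) (h : 0 < N) : Fin N := ⟨N - 1, by omega⟩

namespace Stmt11Aux

variable {N : ℕ}

noncomputable def Ssum (y : EuclideanSpace ℝ (Fin N)) : ℝ := ∑ j, y j * y j

lemma Ssum_nonneg (y : EuclideanSpace ℝ (Fin N)) : 0 ≤ Ssum y :=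
  Finset.sum_nonneg fun _ _ => mul_self_nonneg _

lemma Ssum_eq (y : EuclideanSpace ℝ (Fin N)) : Ssum y = ‖y‖ ^ 2 := by
  have h : ‖y‖ ^ 2 = ∑ i, ‖y i‖ ^ 2 := by
    rw [EuclideanSpace.norm_eq, Real.sq_sqrt (by positivity)]
  rw [h, Ssum]
  refine Finset.sum_congr rfl fun j _ => ?_
  rw [Real.norm_eq_abs, sq_abs, sq]

lemma Ssum_pos (i0 : Fin N) (y : EuclideanSpace ℝ (Fin N)) (h : 0 < y i0) : 0 < Ssum y := by
  have h1 : 0 < y i0 * y i0 := mul_pos h h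
  have h2 := Finset.single_le_sum (f := fun j => y j * y j)
    (fun j _ => mul_self_nonneg _) (Finset.mem_univ i0)
  simp only at h2
  have h3 : Ssum y = ∑ j, y j * y j := rfl
  linarith

lemma hasFDerivAt_coord (i : Fin N) (x : EuclideanSpace ℝ (Fin N)) :
    HasFDerivAt (fun y : EuclideanSpace ℝ (Fin N) => y i)
      (EuclideanSpace.proj i : EuclideanSpace ℝ (Fin N) →L[ℝ] ℝ) x :=
  (EuclideanSpace.proj i : EuclideanSpace ℝ (Fin N) →L[ℝ] ℝ).hasFDerivAt

lemma hasFDerivAt_Ssum (x : EuclideanSpace ℝ (Fin N)) :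
    HasFDerivAt (Ssum (N := N))
      (∑ j, (2 * x j) • (EuclideanSpace.proj j : EuclideanSpace ℝ (Fin N) →L[ℝ] ℝ)) x := by
  have h : ∀ j : Fin N, HasFDerivAt (fun y : EuclideanSpace ℝ (Fin N) => y j * y j)
      ((2 * x j) • (EuclideanSpace.proj j : EuclideanSpace ℝ (Fin N) →L[ℝ] ℝ)) x := by
    intro j
    have hp := hasFDerivAt_coord j x
    have := hp.mul hp
    refine HasFDerivAt.congr_fderiv this ?_
    rw [two_mul, add_smul]
  exact HasFDerivAt.fun_sum (u := Finset.univ) (fun j _ => h j)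

noncomputable def Jmap (x : EuclideanSpace ℝ (Fin N)) : EuclideanSpace ℝ (Fin N) →L[ℝ] ℝ :=
  ∑ j, x j • (EuclideanSpace.proj j : EuclideanSpace ℝ (Fin N) →L[ℝ] ℝ)

lemma Jmap_apply (x v : EuclideanSpace ℝ (Fin N)) : Jmap x v = ∑ j, x j * v j := by
  simp [Jmap]

lemma norm_Jmap_le (x : EuclideanSpace ℝ (Fin N)) : ‖Jmap x‖ ≤ ‖x‖ := by
  refine ContinuousLinearMap.opNorm_le_bound _ (norm_nonneg x) fun v => ?_
  rw [Jmap_apply]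
  have h : (∑ j, x j * v j) = (inner ℝ x v : ℝ) := by
    simp [PiLp.inner_apply, RCLike.inner_apply, conj_trivial, mul_comm]
  rw [Real.norm_eq_abs, h]
  exact abs_real_inner_le_norm x v

lemma abs_coord_le (i0 : Fin N) (y : EuclideanSpace ℝ (Fin N)) : |y i0| ≤ ‖y‖ := by
  have h : |y i0| ^ 2 ≤ ‖y‖ ^ 2 := by
    rw [sq_abs, ← Ssum_eq, sq]
    have := Finset.single_le_sum (f := fun j => y j * y j)
      (fun j _ => mul_self_nonneg _) (Finset.mem_univ i0)
    simpa [Ssum] using this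
  have h2 := Real.sqrt_le_sqrt h
  simpa [Real.sqrt_sq_eq_abs, Real.sqrt_sq (norm_nonneg y), abs_abs] using h2

noncomputable def Dmap (i0 : Fin N) (p e : ℝ) (x : EuclideanSpace ℝ (Fin N)) :
    EuclideanSpace ℝ (Fin N) →L[ℝ] ℝ :=
  (p * x i0 ^ (p - 1) * Ssum x ^ e) • (EuclideanSpace.proj i0 : EuclideanSpace ℝ (Fin N) →L[ℝ] ℝ)
    + (2 * e * x i0 ^ p * Ssum x ^ (e - 1)) • Jmap x

lemma sum_two_smul (x : EuclideanSpace ℝ (Fin N)) :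
    (∑ j, (2 * x j) • (EuclideanSpace.proj j : EuclideanSpace ℝ (Fin N) →L[ℝ] ℝ))
      = (2 : ℝ) • Jmap x := by
  rw [Jmap, Finset.smul_sum]
  exact Finset.sum_congr rfl fun j _ => by rw [smul_smul]

lemma hasFDerivAt_W (i0 : Fin N) (p e : ℝ) (x : EuclideanSpace ℝ (Fin N)) (ht : 0 < x i0) :
    HasFDerivAt (fun y : EuclideanSpace ℝ (Fin N) => y i0 ^ p * Ssum y ^ e)
      (Dmap i0 p e x) x := by
  have hs := Ssum_pos i0 x ht
  have h1 : HasFDerivAt (fun y : EuclideanSpace ℝ (Fin N) => y i0 ^ p)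
      ((p * x i0 ^ (p - 1)) • (EuclideanSpace.proj i0 : EuclideanSpace ℝ (Fin N) →L[ℝ] ℝ)) x :=
    (hasFDerivAt_coord i0 x).rpow_const (Or.inl ht.ne')
  have h2 : HasFDerivAt (fun y : EuclideanSpace ℝ (Fin N) => Ssum y ^ e)
      ((e * Ssum x ^ (e - 1)) • ((2 : ℝ) • Jmap x)) x := by
    have := (hasFDerivAt_Ssum x).rpow_const (p := e) (Or.inl hs.ne')
    rwa [sum_two_smul] at this
  have h3 := h1.mul h2
  refine h3.congr_fderiv ?_
  rw [Dmap]
  module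

lemma Dmap_single (i0 i : Fin N) (p e : ℝ) (x : EuclideanSpace ℝ (Fin N)) :
    Dmap i0 p e x (EuclideanSpace.single i 1)
      = p * x i0 ^ (p - 1) * Ssum x ^ e * (if i0 = i then 1 else 0)
        + 2 * e * x i0 ^ p * Ssum x ^ (e - 1) * x i := by
  have hj : Jmap x (EuclideanSpace.single i 1) = x i := by
    simp [Jmap, EuclideanSpace.single_apply]
  simp [Dmap, hj, EuclideanSpace.single_apply]

lemma norm_proj_le (i0 : Fin N) :
    ‖(EuclideanSpace.proj i0 : EuclideanSpace ℝ (Fin N) →L[ℝ] ℝ)‖ ≤ 1 := by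
  refine ContinuousLinearMap.opNorm_le_bound _ zero_le_one fun v => ?_
  rw [one_mul]
  simpa [Real.norm_eq_abs] using abs_coord_le i0 v

lemma hasFDerivAt_F (i0 : Fin N) (γ a cc : ℝ) (x : EuclideanSpace ℝ (Fin N)) (ht : 0 < x i0) :
    HasFDerivAt (fun y : EuclideanSpace ℝ (Fin N) => γ * y i0 ^ a * Ssum y ^ cc)
      (γ • Dmap i0 a cc x) x := by
  have := (hasFDerivAt_W i0 a cc x ht).const_mul γ
  simpa [mul_assoc] using this

lemma grad_le (i0 : Fin N) (γ a cc : ℝ) (hγ : 0 ≤ γ) (x : EuclideanSpace ℝ (Fin N))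
    (ht : 0 < x i0) :
    ‖gradient (fun y : EuclideanSpace ℝ (Fin N) => γ * y i0 ^ a * Ssum y ^ cc) x‖
      ≤ γ * (|a * x i0 ^ (a - 1) * Ssum x ^ cc|
          + |2 * cc * x i0 ^ a * Ssum x ^ (cc - 1)| * ‖x‖) := by
  have hF := hasFDerivAt_F i0 γ a cc x ht
  have h1 : ‖gradient (fun y : EuclideanSpace ℝ (Fin N) => γ * y i0 ^ a * Ssum y ^ cc) x‖
      = ‖fderiv ℝ (fun y : EuclideanSpace ℝ (Fin N) => γ * y i0 ^ a * Ssum y ^ cc) x‖ := by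
    unfold gradient
    exact LinearIsometryEquiv.norm_map _ _
  rw [h1, hF.fderiv]
  rw [norm_smul, Real.norm_eq_abs, abs_of_nonneg hγ]
  refine mul_le_mul_of_nonneg_left ?_ hγ
  rw [Dmap]
  refine (norm_add_le _ _).trans ?_
  refine add_le_add ?_ ?_
  · rw [norm_smul, Real.norm_eq_abs]
    calc |a * x i0 ^ (a - 1) * Ssum x ^ cc|
          * ‖(EuclideanSpace.proj i0 : EuclideanSpace ℝ (Fin N) →L[ℝ] ℝ)‖
        ≤ |a * x i0 ^ (a - 1) * Ssum x ^ cc| * 1 :=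
          mul_le_mul_of_nonneg_left (norm_proj_le i0) (abs_nonneg _)
      _ = _ := mul_one _
  · rw [norm_smul, Real.norm_eq_abs]
    exact mul_le_mul_of_nonneg_left (norm_Jmap_le x) (abs_nonneg _)

lemma lap_eq (i0 : Fin N) (γ a cc : ℝ) (x : EuclideanSpace ℝ (Fin N)) (ht : 0 < x i0) :
    lap (fun y : EuclideanSpace ℝ (Fin N) => γ * y i0 ^ a * Ssum y ^ cc) x
      = γ * (a * (a - 1) * x i0 ^ (a - 2) * Ssum x ^ cc
          + 4 * a * cc * (x i0 ^ (a - 1) * x i0) * Ssum x ^ (cc - 1)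
          + 2 * cc * N * x i0 ^ a * Ssum x ^ (cc - 1)
          + 4 * cc * (cc - 1) * x i0 ^ a * (Ssum x ^ (cc - 2) * Ssum x)) := by
  have hcont : Continuous fun y : EuclideanSpace ℝ (Fin N) => y i0 :=
    (EuclideanSpace.proj i0 : EuclideanSpace ℝ (Fin N) →L[ℝ] ℝ).continuous
  have hmem : {y : EuclideanSpace ℝ (Fin N) | 0 < y i0} ∈ nhds x :=
    (isOpen_lt continuous_const hcont).mem_nhds ht
  set g : Fin N → EuclideanSpace ℝ (Fin N) → ℝ := fun i y =>
    γ * (a * y i0 ^ (a - 1) * Ssum y ^ cc * (if i0 = i then 1 else 0)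
      + 2 * cc * y i0 ^ a * Ssum y ^ (cc - 1) * y i) with hg
  have hev : ∀ i : Fin N,
      (fun y => fderiv ℝ (fun z : EuclideanSpace ℝ (Fin N) => γ * z i0 ^ a * Ssum z ^ cc) y
          (EuclideanSpace.single i 1)) =ᶠ[nhds x] g i := by
    intro i
    refine Filter.eventuallyEq_of_mem hmem fun y hy => ?_
    have hy' : 0 < y i0 := hy
    rw [(hasFDerivAt_F i0 γ a cc y hy').fderiv]
    rw [ContinuousLinearMap.smul_apply, Dmap_single, hg]
    simp
  have hgd : ∀ i : Fin N, HasFDerivAt (g i)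
      (γ • ((if i0 = i then (1:ℝ) else 0) • (a • Dmap i0 (a - 1) cc x)
        + (2 * cc) • ((x i0 ^ a * Ssum x ^ (cc - 1)) •
            (EuclideanSpace.proj i : EuclideanSpace ℝ (Fin N) →L[ℝ] ℝ)
          + x i • Dmap i0 a (cc - 1) x))) x := by
    intro i
    have h1 := ((hasFDerivAt_W i0 (a - 1) cc x ht).const_mul a).mul_const
      (if i0 = i then (1:ℝ) else 0)
    have h3 : HasFDerivAt (fun y : EuclideanSpace ℝ (Fin N) => y i)
        (EuclideanSpace.proj i : EuclideanSpace ℝ (Fin N) →L[ℝ] ℝ) x :=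
      (EuclideanSpace.proj i : EuclideanSpace ℝ (Fin N) →L[ℝ] ℝ).hasFDerivAt
    have h23 := ((hasFDerivAt_W i0 a (cc - 1) x ht).mul h3).const_mul (2 * cc)
    have h4 := (h1.add h23).const_mul γ
    rw [hg]
    simpa [mul_assoc] using h4
  have hterm : ∀ i : Fin N,
      fderiv ℝ (fun y => fderiv ℝ (fun z : EuclideanSpace ℝ (Fin N) => γ * z i0 ^ a * Ssum z ^ cc) y
          (EuclideanSpace.single i 1)) x (EuclideanSpace.single i 1)
        = γ * ((if i0 = i then (1:ℝ) else 0)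
              * (a * (Dmap i0 (a - 1) cc x (EuclideanSpace.single i 1)))
          + (2 * cc) * ((x i0 ^ a * Ssum x ^ (cc - 1)) * (if i = i then (1:ℝ) else 0)
            + x i * (Dmap i0 a (cc - 1) x (EuclideanSpace.single i 1)))) := by
    intro i
    rw [(hev i).fderiv_eq, (hgd i).fderiv]
    by_cases h : i0 = i
    · subst h; simp [EuclideanSpace.single_apply]; ring
    · simp [h, EuclideanSpace.single_apply]; ring
  rw [lap]
  rw [Finset.sum_congr rfl fun i _ => hterm i]
  have hsplit : ∀ i : Fin N,
      γ * ((if i0 = i then (1:ℝ) else 0)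
            * (a * (Dmap i0 (a - 1) cc x (EuclideanSpace.single i 1)))
        + (2 * cc) * ((x i0 ^ a * Ssum x ^ (cc - 1)) * (if i = i then (1:ℝ) else 0)
          + x i * (Dmap i0 a (cc - 1) x (EuclideanSpace.single i 1))))
      = (γ * (a * ((a - 1) * x i0 ^ (a - 2) * Ssum x ^ cc))) * (if i0 = i then 1 else 0)
        + (γ * (4 * a * cc * (x i0 ^ (a - 1) * Ssum x ^ (cc - 1))))
            * ((if i0 = i then 1 else 0) * x i)
        + γ * (2 * cc * (x i0 ^ a * Ssum x ^ (cc - 1)))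
        + (γ * (4 * cc * (cc - 1) * (x i0 ^ a * Ssum x ^ (cc - 2)))) * (x i * x i) := by
    intro i
    rw [Dmap_single, Dmap_single, show a - 1 - 1 = a - 2 from by ring,
      show cc - 1 - 1 = cc - 2 from by ring]
    by_cases h : i0 = i
    · subst h; simp; ring
    · simp [h]; ring
  rw [Finset.sum_congr rfl fun i _ => hsplit i]
  have hsum1 : (∑ i : Fin N, (if i0 = i then (1:ℝ) else 0)) = 1 := by simp
  have hsum2 : (∑ i : Fin N, (if i0 = i then (1:ℝ) else 0) * x i) = x i0 := by
    simp [ite_mul]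
  have hsum4 : (∑ i : Fin N, x i * x i) = Ssum x := rfl
  rw [Finset.sum_add_distrib, Finset.sum_add_distrib, Finset.sum_add_distrib]
  simp only [← Finset.mul_sum]
  rw [hsum1, hsum2, hsum4, Finset.sum_const, Finset.card_univ, Fintype.card_fin,
    nsmul_eq_mul]
  ring

lemma Ssum_rpow (y : EuclideanSpace ℝ (Fin N)) (w : ℝ) : Ssum y ^ w = ‖y‖ ^ (2 * w) := by
  rw [Ssum_eq, ← Real.rpow_natCast ‖y‖ 2, ← Real.rpow_mul (norm_nonneg y)]
  norm_num

end Stmt11Aux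

open Stmt11Aux in
set_option maxHeartbeats 2000000 in
theorem stmt11_key (N : ℕ) (hN : 3 ≤ N) (i0 : Fin N) (μ α q α₀ : ℝ)
    (hμ : μ ∈ Set.Ioc (0:ℝ) (1/4)) (hα : α = 1/2 + Real.sqrt (1/4 - μ))
    (hq1 : 1 < q)
    (hα₀ : α₀ ∈ Set.Ioo α 1) (hq3 : q < ((N : ℝ) + α₀) / ((N : ℝ) + α₀ - 1)) :
    ∃ γ₂ : ℝ, 0 < γ₂ ∧
      ∀ x : EuclideanSpace ℝ (Fin N), 0 < x i0 →
        ‖gradient (fun y => γ₂ * (y i0) ^ α₀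
            * ‖y‖ ^ (-(2 - q) / (q - 1) - α₀)) x‖ ^ q
          ≤ lap (fun y => γ₂ * (y i0) ^ α₀
                * ‖y‖ ^ (-(2 - q) / (q - 1) - α₀)) x
            + (μ / (x i0) ^ 2) *
                (γ₂ * (x i0) ^ α₀ * ‖x‖ ^ (-(2 - q) / (q - 1) - α₀)) := by
  obtain ⟨hμ0, hμ4⟩ := hμ
  set σ := Real.sqrt (1/4 - μ) with hσdef
  have hσ0 : 0 ≤ σ := Real.sqrt_nonneg _
  have hσsq : σ ^ 2 = 1/4 - μ := Real.sq_sqrt (by linarith)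
  obtain ⟨hα₀1, hα₀2⟩ := hα₀
  have hα₀pos : 0 < α₀ := by rw [hα] at hα₀1; linarith
  have hq_1 : 0 < q - 1 := by linarith
  have hN3 : (3:ℝ) ≤ (N:ℝ) := by exact_mod_cast hN
  have hden : (2:ℝ) < (N:ℝ) + α₀ - 1 := by linarith
  have hkey : q * ((N:ℝ) + α₀ - 1) < (N:ℝ) + α₀ :=
    (lt_div_iff₀ (by linarith)).mp hq3
  have hq2 : q < 2 := by
    by_contra h
    push_neg at h
    have h1 : 2 * ((N:ℝ) + α₀ - 1) ≤ q * ((N:ℝ) + α₀ - 1) :=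
      mul_le_mul_of_nonneg_right h (by linarith)
    linarith
  set b : ℝ := -(2 - q) / (q - 1) - α₀ with hb
  have hbq : b * (q - 1) = (q - 2) - α₀ * (q - 1) := by
    rw [hb]; field_simp; ring
  have hb_neg : b < 0 := by
    have h1 : -(2 - q) / (q - 1) < 0 := div_neg_of_neg_of_pos (by linarith) hq_1
    rw [hb]; linarith
  have hC2 : b + 2 * α₀ + N - 2 < 0 := by
    have heq : (b + 2 * α₀ + (N:ℝ) - 2) * (q - 1)
        = q * ((N:ℝ) + α₀ - 1) - ((N:ℝ) + α₀) := by linear_combination hbq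
    have h1 : (b + 2 * α₀ + (N:ℝ) - 2) * (q - 1) < 0 := by rw [heq]; linarith
    by_contra h
    push_neg at h
    have h2 := mul_nonneg h hq_1.le
    linarith
  set C₁ : ℝ := α₀ * (α₀ - 1) + μ with hC₁def
  have hC₁ : 0 < C₁ := by
    have h1 : 0 < α₀ - 1/2 - σ := by rw [hα] at hα₀1; linarith
    have h2 : 0 < α₀ - 1/2 + σ := by rw [hα] at hα₀1; linarith
    have heq : C₁ = (α₀ - 1/2 - σ) * (α₀ - 1/2 + σ) := by
      rw [hC₁def]; linear_combination hσsq
    rw [heq]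
    exact mul_pos h1 h2
  set K : ℝ := α₀ - b with hKdef
  have hK : 0 < K := by rw [hKdef]; linarith
  have hKq : 0 < K ^ q := Real.rpow_pos_of_pos hK q
  set γ : ℝ := (C₁ / K ^ q) ^ (1 / (q - 1)) with hγdef
  have hγ : 0 < γ := Real.rpow_pos_of_pos (div_pos hC₁ hKq) _
  have hγq : γ ^ q * K ^ q = γ * C₁ := by
    have e0 : γ ^ (1 + (q - 1)) = γ * γ ^ (q - 1) := by
      rw [Real.rpow_add hγ, Real.rpow_one]
    have e1 : γ ^ q = γ * γ ^ (q - 1) := by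
      rw [← e0]; congr 1; ring
    have e2 : γ ^ (q - 1) = C₁ / K ^ q := by
      rw [hγdef, ← Real.rpow_mul (le_of_lt (div_pos hC₁ hKq)),
        one_div_mul_cancel (by linarith : q - 1 ≠ 0), Real.rpow_one]
    rw [e1, e2]
    field_simp
  refine ⟨γ, hγ, ?_⟩
  intro x ht
  set cc : ℝ := b / 2 with hcc
  have hfun : (fun y : EuclideanSpace ℝ (Fin N) => γ * (y i0) ^ α₀ * ‖y‖ ^ b)
      = (fun y : EuclideanSpace ℝ (Fin N) => γ * y i0 ^ α₀ * Ssum y ^ cc) := by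
    funext y
    rw [hcc, Ssum_rpow, show 2 * (b / 2) = b from by ring]
  rw [hfun]
  set t : ℝ := x i0 with htdef
  set r : ℝ := ‖x‖ with hrdef
  have htr : t ≤ r := (le_abs_self _).trans (abs_coord_le i0 x)
  have hr : 0 < r := lt_of_lt_of_le ht htr
  -- convert Ssum powers to r powers
  have hs1 : Ssum x ^ cc = r ^ b := by
    rw [Ssum_rpow, show 2 * cc = b from by rw [hcc]; ring]
  have hs2 : Ssum x ^ (cc - 1) = r ^ (b - 2) := by
    rw [Ssum_rpow, show 2 * (cc - 1) = b - 2 from by rw [hcc]; ring]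
  have hs3 : Ssum x ^ (cc - 2) = r ^ (b - 4) := by
    rw [Ssum_rpow, show 2 * (cc - 2) = b - 4 from by rw [hcc]; ring]
  have hSx : Ssum x = r ^ (2:ℝ) := by
    have := Ssum_rpow x 1
    simpa [Real.rpow_one] using this
  -- positivity of rpow quantities
  have htp : ∀ w : ℝ, 0 < t ^ w := fun w => Real.rpow_pos_of_pos ht w
  have hrp : ∀ w : ℝ, 0 < r ^ w := fun w => Real.rpow_pos_of_pos hr w
  -- rpow collapsing identities
  have e1 : t ^ (α₀ - 1) * t = t ^ α₀ := by
    rw [← Real.rpow_add_one ht.ne' (α₀ - 1)]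
    congr 1; ring
  have e3 : t ^ (α₀ - 2) * t ^ (2:ℝ) = t ^ α₀ := by
    rw [← Real.rpow_add ht]; congr 1; ring
  have e4 : r ^ (b - 2) * r ^ (2:ℝ) = r ^ b := by
    rw [← Real.rpow_add hr]; congr 1; ring
  have e5 : r ^ (b - 4) * r ^ (2:ℝ) = r ^ (b - 2) := by
    rw [← Real.rpow_add hr]; congr 1; ring
  have hrsq : r ^ (2:ℝ) = r ^ (2:ℕ) := by
    exact_mod_cast Real.rpow_natCast r 2
  have htsq : t ^ (2:ℝ) = t ^ (2:ℕ) := by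
    exact_mod_cast Real.rpow_natCast t 2
  -- Laplacian value
  have hlap : lap (fun y : EuclideanSpace ℝ (Fin N) => γ * y i0 ^ α₀ * Ssum y ^ cc) x
      = γ * (α₀ * (α₀ - 1) * t ^ (α₀ - 2) * r ^ b
          + b * (b + 2 * α₀ + N - 2) * t ^ α₀ * r ^ (b - 2)) := by
    rw [lap_eq i0 γ α₀ cc x ht, hs1, hs2, hs3, hSx, e1, e5]
    rw [show (cc:ℝ) = b / 2 from hcc]
    ring
  -- the μ term
  have hmu : μ / t ^ 2 * (γ * t ^ α₀ * r ^ b) = γ * μ * (t ^ (α₀ - 2) * r ^ b) := by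
    rw [← e3, htsq]
    field_simp
  -- gradient bound
  have hgrad : ‖gradient (fun y : EuclideanSpace ℝ (Fin N)
        => γ * y i0 ^ α₀ * Ssum y ^ cc) x‖ ≤ γ * K * (t ^ (α₀ - 1) * r ^ b) := by
    refine (grad_le i0 γ α₀ cc hγ.le x ht).trans ?_
    rw [hs1, hs2]
    have ha1 : |α₀ * t ^ (α₀ - 1) * r ^ b| = α₀ * t ^ (α₀ - 1) * r ^ b := by
      apply abs_of_nonneg; positivity
    have ha2 : |2 * cc * t ^ α₀ * r ^ (b - 2)| = (-b) * t ^ α₀ * r ^ (b - 2) := by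
      rw [abs_of_nonpos]
      · rw [hcc]; ring
      · have : 2 * cc = b := by rw [hcc]; ring
        rw [this]
        have h9 : b * (t ^ α₀ * r ^ (b - 2)) ≤ 0 :=
          mul_nonpos_of_nonpos_of_nonneg hb_neg.le (by positivity)
        linarith [h9]
    rw [ha1, ha2]
    have h5 : (-b) * t ^ α₀ * r ^ (b - 2) * r ≤ (-b) * t ^ (α₀ - 1) * r ^ b := by
      have hbpos : 0 < -b := by linarith
      have h6 : t ^ α₀ * (r ^ (b - 2) * r) ≤ (t ^ (α₀ - 1) * r) * (r ^ (b - 2) * r) := by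
        have h7 : t ^ α₀ ≤ t ^ (α₀ - 1) * r := by
          rw [← e1]
          exact mul_le_mul_of_nonneg_left htr (htp (α₀ - 1)).le
        exact mul_le_mul_of_nonneg_right h7 (by positivity)
      have h8 : (t ^ (α₀ - 1) * r) * (r ^ (b - 2) * r) = t ^ (α₀ - 1) * r ^ b := by
        rw [← e4, hrsq]; ring
      calc (-b) * t ^ α₀ * r ^ (b - 2) * r = (-b) * (t ^ α₀ * (r ^ (b - 2) * r)) := by ring
        _ ≤ (-b) * (t ^ (α₀ - 1) * r ^ b) := by
            rw [← h8]; exact mul_le_mul_of_nonneg_left h6 hbpos.le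
        _ = (-b) * t ^ (α₀ - 1) * r ^ b := by ring
    have hKb : γ * K * (t ^ (α₀ - 1) * r ^ b)
        = γ * (α₀ * t ^ (α₀ - 1) * r ^ b + (-b) * t ^ (α₀ - 1) * r ^ b) := by
      rw [hKdef]; ring
    rw [hKb]
    have := mul_le_mul_of_nonneg_left
      (add_le_add_left h5 (α₀ * t ^ (α₀ - 1) * r ^ b)) hγ.le
    linarith
  -- raise to power q
  have hMpos : 0 ≤ γ * K * (t ^ (α₀ - 1) * r ^ b) := by positivity
  have hLHS : ‖gradient (fun y : EuclideanSpace ℝ (Fin N)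
        => γ * y i0 ^ α₀ * Ssum y ^ cc) x‖ ^ q
      ≤ (γ * K * (t ^ (α₀ - 1) * r ^ b)) ^ q :=
    Real.rpow_le_rpow (norm_nonneg _) hgrad (by linarith)
  have hexp : (γ * K * (t ^ (α₀ - 1) * r ^ b)) ^ q
      = γ ^ q * K ^ q * (t ^ ((α₀ - 1) * q) * r ^ (b * q)) := by
    rw [Real.mul_rpow (by positivity) (by positivity),
      Real.mul_rpow (by positivity) (by positivity),
      Real.mul_rpow (by positivity) (by positivity),
      ← Real.rpow_mul ht.le, ← Real.rpow_mul hr.le]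
  have hE : 0 < -(b * (q - 1)) := by
    have h := mul_pos (neg_pos.mpr hb_neg) hq_1
    linarith [h]
  have hsplit1 : t ^ ((α₀ - 1) * q) = t ^ (α₀ - 2) * t ^ (-(b * (q - 1))) := by
    rw [← Real.rpow_add ht]; congr 1; linarith [hbq]
  have hsplit2 : r ^ (b * q) = r ^ b * r ^ (b * (q - 1)) := by
    rw [← Real.rpow_add hr]; congr 1; ring
  have hle1 : t ^ (-(b * (q - 1))) * r ^ (b * (q - 1)) ≤ 1 := by
    have h1 : t ^ (-(b * (q - 1))) ≤ r ^ (-(b * (q - 1))) :=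
      Real.rpow_le_rpow ht.le htr hE.le
    have h2 : r ^ (b * (q - 1)) = (r ^ (-(b * (q - 1))))⁻¹ := by
      rw [← Real.rpow_neg hr.le]; congr 1; ring
    rw [h2, ← div_eq_mul_inv]
    exact (div_le_one (hrp _)).mpr h1
  have hmain : γ ^ q * K ^ q * (t ^ ((α₀ - 1) * q) * r ^ (b * q))
      ≤ γ * C₁ * (t ^ (α₀ - 2) * r ^ b) := by
    rw [hsplit1, hsplit2, hγq]
    have hre : t ^ (α₀ - 2) * t ^ (-(b * (q - 1))) * (r ^ b * r ^ (b * (q - 1)))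
        = (t ^ (α₀ - 2) * r ^ b) * (t ^ (-(b * (q - 1))) * r ^ (b * (q - 1))) := by ring
    rw [hre]
    calc γ * C₁ * ((t ^ (α₀ - 2) * r ^ b) * (t ^ (-(b * (q - 1))) * r ^ (b * (q - 1))))
        ≤ γ * C₁ * ((t ^ (α₀ - 2) * r ^ b) * 1) := by
          refine mul_le_mul_of_nonneg_left ?_ (by positivity)
          exact mul_le_mul_of_nonneg_left hle1 (by positivity)
      _ = γ * C₁ * (t ^ (α₀ - 2) * r ^ b) := by ring
  have hpos2 : 0 ≤ γ * (b * (b + 2 * α₀ + N - 2)) * (t ^ α₀ * r ^ (b - 2)) := by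
    have hbb : 0 < b * (b + 2 * α₀ + N - 2) := mul_pos_of_neg_of_neg hb_neg hC2
    have := mul_pos (htp α₀) (hrp (b - 2))
    positivity
  have hfinal : γ * C₁ * (t ^ (α₀ - 2) * r ^ b)
      ≤ lap (fun y : EuclideanSpace ℝ (Fin N) => γ * y i0 ^ α₀ * Ssum y ^ cc) x
        + μ / t ^ 2 * (γ * t ^ α₀ * r ^ b) := by
    rw [hlap, hmu]
    have hid : γ * C₁ * (t ^ (α₀ - 2) * r ^ b)
        = γ * (α₀ * (α₀ - 1) * t ^ (α₀ - 2) * r ^ b)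
          + γ * μ * (t ^ (α₀ - 2) * r ^ b) := by
      rw [hC₁def]; ring
    rw [hid]
    linarith [hpos2]
  calc ‖gradient (fun y : EuclideanSpace ℝ (Fin N)
          => γ * y i0 ^ α₀ * Ssum y ^ cc) x‖ ^ q
      ≤ (γ * K * (t ^ (α₀ - 1) * r ^ b)) ^ q := hLHS
    _ = γ ^ q * K ^ q * (t ^ ((α₀ - 1) * q) * r ^ (b * q)) := hexp
    _ ≤ γ * C₁ * (t ^ (α₀ - 2) * r ^ b) := hmain
    _ ≤ _ := hfinal

/-- The separable subsolution `γ₂ x_N^{α₀} |x|^{-(2-q)/(q-1)-α₀}` on the half-space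
(Step 1 of the proof of Theorem G). -/
theorem stmt_11 (N : ℕ) (hN : 3 ≤ N) (μ α q α₀ : ℝ)
    (hμ : μ ∈ Set.Ioc (0:ℝ) (1/4)) (hα : α = 1/2 + Real.sqrt (1/4 - μ))
    (hq1 : 1 < q) (hq2 : q < ((N : ℝ) + α) / ((N : ℝ) + α - 1))
    (hα₀ : α₀ ∈ Set.Ioo α 1) (hq3 : q < ((N : ℝ) + α₀) / ((N : ℝ) + α₀ - 1)) :
    ∃ γ₂ : ℝ, 0 < γ₂ ∧
      ∀ x : EuclideanSpace ℝ (Fin N), 0 < x (lastIdx N (by omega)) →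
        ‖gradient (fun y => γ₂ * (y (lastIdx N (by omega))) ^ α₀
            * ‖y‖ ^ (-(2 - q) / (q - 1) - α₀)) x‖ ^ q
          ≤ lap (fun y => γ₂ * (y (lastIdx N (by omega))) ^ α₀
                * ‖y‖ ^ (-(2 - q) / (q - 1) - α₀)) x
            + (μ / (x (lastIdx N (by omega))) ^ 2) *
                (γ₂ * (x (lastIdx N (by omega))) ^ α₀ * ‖x‖ ^ (-(2 - q) / (q - 1) - α₀)) := by
  exact stmt11_key N hN (lastIdx N (by omega)) μ α q α₀ hμ hα hq1 hα₀ hq3
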